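/- Fix a tier structure t and a report Q_i of student i that misranks two same-tier schools relative to his true preference R_i (there exist s, s′ with t_s = t_{s′}, s P_i s′ but s′ Q_i s). Let Q*_i agree with Q_i except that within that tier its acceptable schools are reordered to agree with R_i. Then for every profile Q_{-i} of others' reports, TDA(t)(Q*_i, Q_{-i})(i) R_i TDA(t)(Q_i, Q_{-i})(i); consequently Q_i is either weakly dominated by Q*_i or yields the same assignment for i as Q*_i against every Q_{-i}. -/

import Mathlib

set_option linter.unusedSectionVars false

namespace SchoolChoice

/-- A strict preference over `S ∪ {self}`, encoded by an injective ranking function on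
`Option S`; `none` denotes being unmatched (the student himself), and a smaller rank
means more preferred. Injective rankings on a finite set are exactly strict linear orders. -/
structure Pref (S : Type) where
  rank : Option S → ℕ
  inj : Function.Injective rank

/-- Quotas together with strict priorities of the schools: `prank s` ranks the students
at school `s`, a smaller rank meaning higher priority. -/
structure Prio (I S : Type) where
  quota : S → ℕ
  prank : S → I → ℕ
  inj : ∀ s, Function.Injective (prank s)

variable {I S : Type} [Fintype I] [Fintype S] [DecidableEq I] [DecidableEq S]

/-- `i` has strictly higher priority than `j` at school `s`. -/
def Prio.higher (E : Prio I S) (s : S) (i j : I) : Prop :=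
  E.prank s i < E.prank s j

/-- A matching assigns to each student a school or himself (`none`). -/
abbrev Matching (I S : Type) := I → Option S

/-- The set of students assigned to school `s`. -/
def assigned (μ : Matching I S) (s : S) : Finset I :=
  Finset.univ.filter (fun i => μ i = some s)

/-- Quotas are respected. -/
def Feasible (E : Prio I S) (μ : Matching I S) : Prop :=
  ∀ s, (assigned μ s).card ≤ E.quota s

/-- `(i, s)` is a blocking pair of `μ` with respect to preferences `R`:
`i` strictly prefers `s` to his assignment, and either `s` has an empty seat
(wastefulness) or some student assigned to `s` has lower priority than `i`
(justified envy). -/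
def Blocks (E : Prio I S) (R : I → Pref S) (μ : Matching I S) (i : I) (s : S) : Prop :=
  (R i).rank (some s) < (R i).rank (μ i) ∧
    ((assigned μ s).card < E.quota s ∨ ∃ j, μ j = some s ∧ E.higher s i j)

/-- Individual rationality: every student weakly prefers his assignment to being unmatched. -/
def IndivRat (R : I → Pref S) (μ : Matching I S) : Prop :=
  ∀ i, (R i).rank (μ i) ≤ (R i).rank none

/-- Non-wastefulness: no student prefers a school with an empty seat to his assignment. -/
def NonWasteful (E : Prio I S) (R : I → Pref S) (μ : Matching I S) : Prop :=
  ∀ i s, (R i).rank (some s) < (R i).rank (μ i) → E.quota s ≤ (assigned μ s).card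

/-- Stability: feasible, individually rational, and no blocking pair
(no justified envy and non-wasteful). -/
def Stable (E : Prio I S) (R : I → Pref S) (μ : Matching I S) : Prop :=
  Feasible E μ ∧ IndivRat R μ ∧ ∀ i s, ¬ Blocks E R μ i s

/-- The student-optimal stable matching for the (reported) preferences. -/
def StudentOptimal (E : Prio I S) (R : I → Pref S) (μ : Matching I S) : Prop :=
  Stable E R μ ∧ ∀ ν, Stable E R ν → ∀ i, (R i).rank (μ i) ≤ (R i).rank (ν i)

open Classical in
/-- The student-proposing deferred acceptance mechanism: by the Gale–Shapley theorem its
outcome is the (unique) student-optimal stable matching of the reported preferences. -/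
noncomputable def DA (E : Prio I S) (R : I → Pref S) : Matching I S :=
  if h : ∃ μ, StudentOptimal E R μ then h.choose else fun _ => none

/-- A strict upper bound for the values of a ranking. -/
noncomputable def bnd (p : Pref S) : ℕ := (Finset.univ.sup p.rank) + 1

lemma rank_lt_bnd (p : Pref S) (x : Option S) : p.rank x < bnd p :=
  Nat.lt_succ_of_le (Finset.le_sup (Finset.mem_univ x))

private lemma mul_add_lt {a K B r : ℕ} (ha : a ≤ K) (hr : r < B) :
    a * B + r < (K + 1) * B := by
  calc a * B + r < a * B + B := by omega
    _ = (a + 1) * B := by ring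
    _ ≤ (K + 1) * B := Nat.mul_le_mul (by omega) le_rfl

/-- Is an alternative "inside the market" `A`?  `none` always is. -/
def goodB (A : S → Prop) [DecidablePred A] : Option S → Bool
  | none => true
  | some s => decide (A s)

/-- The preference truncated to the set of schools `A`: schools in `A` (and the outside
option `none`) keep their relative order, while all schools outside `A` are pushed below
`none` (become unacceptable), keeping their relative order among themselves. -/
noncomputable def trunc (A : S → Prop) [DecidablePred A] (p : Pref S) : Pref S where
  rank x := (if goodB A x then 0 else bnd p) + p.rank x
  inj := by
    intro x y h
    by_cases hx : goodB A x <;> by_cases hy : goodB A y <;>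
      simp only [hx, hy, if_true, if_false, Bool.false_eq_true, zero_add] at h
    · exact p.inj h
    · have := rank_lt_bnd p x; omega
    · have := rank_lt_bnd p y; omega
    · exact p.inj (by omega)

/-- The reshuffled preference with respect to a tier structure `t`: acceptable schools
are grouped by tier in increasing tier order (keeping the original relative order within
each tier) above `none`, and all unacceptable schools are placed below `none`. -/
noncomputable def reshuffle (t : S → ℕ) (p : Pref S) : Pref S where
  rank x :=
    Option.elim x ((Finset.univ.sup t + 1) * bnd p)
      (fun s =>
        if p.rank (some s) < p.rank none then t s * bnd p + p.rank (some s)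
        else (Finset.univ.sup t + 1) * bnd p + 1 + p.rank (some s))
  inj := by
    have hB : ∀ x, p.rank x < bnd p := rank_lt_bnd p
    have hK : ∀ s : S, t s ≤ Finset.univ.sup t := fun s => Finset.le_sup (Finset.mem_univ s)
    intro x y h
    rcases x with _ | s <;> rcases y with _ | s' <;>
      simp only [Option.elim_none, Option.elim_some] at h
    · rfl
    · by_cases hy : p.rank (some s') < p.rank none <;> simp only [hy, if_true, if_false] at h
      · have := mul_add_lt (hK s') (hB (some s')); omega
      · omega
    · by_cases hx : p.rank (some s) < p.rank none <;> simp only [hx, if_true, if_false] at h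
      · have := mul_add_lt (hK s) (hB (some s)); omega
      · omega
    · by_cases hx : p.rank (some s) < p.rank none <;>
        by_cases hy : p.rank (some s') < p.rank none <;>
        simp only [hx, hy, if_true, if_false] at h
      · have hts : t s = t s' := by
          rcases Nat.lt_trichotomy (t s) (t s') with h1 | h1 | h1
          · have h2 : t s * bnd p + p.rank (some s) < t s' * bnd p + p.rank (some s') := by
              have h3 := mul_add_lt (a := t s) (K := t s' - 1) (B := bnd p) (by omega) (hB (some s))
              have h4 : (t s' - 1 + 1) * bnd p = t s' * bnd p := by congr 1; omega
              omega
            omega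
          · exact h1
          · have h2 : t s' * bnd p + p.rank (some s') < t s * bnd p + p.rank (some s) := by
              have h3 := mul_add_lt (a := t s') (K := t s - 1) (B := bnd p) (by omega) (hB (some s'))
              have h4 : (t s - 1 + 1) * bnd p = t s * bnd p := by congr 1; omega
              omega
            omega
        rw [hts] at h
        exact p.inj (by omega)
      · have := mul_add_lt (hK s) (hB (some s)); omega
      · have := mul_add_lt (hK s') (hB (some s')); omega
      · exact p.inj (by omega)

/-- A tier structure assigning each school a tier in `{1, …, T}`, each tier nonempty. -/
def IsTierStructure (t : S → ℕ) (T : ℕ) : Prop :=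
  (∀ s, 1 ≤ t s ∧ t s ≤ T) ∧ ∀ k, 1 ≤ k → k ≤ T → ∃ s, t s = k

/-- Rounds `1, …, k` of the tiered deferred acceptance mechanism: in round `k` the
students left unmatched so far participate in the DA mechanism with their preferences
truncated to the tier-`k` schools (already matched students participate with nothing
acceptable); students matched in earlier rounds keep their assignments. -/
noncomputable def TDAaux (E : Prio I S) (t : S → ℕ) (Q : I → Pref S) : ℕ → Matching I S
  | 0 => fun _ => none
  | k + 1 => fun i =>
      match TDAaux E t Q k i with
      | some s => some s
      | none =>
          DA E (fun j =>
            if TDAaux E t Q k j = none then trunc (fun s => t s = k + 1) (Q j)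
            else trunc (fun _ => False) (Q j)) i

/-- The tiered deferred acceptance mechanism under tier structure `t`. -/
noncomputable def TDA (E : Prio I S) (t : S → ℕ) (Q : I → Pref S) : Matching I S :=
  TDAaux E t Q (Finset.univ.sup t)

/-- `Q` is a (pure) Nash equilibrium of the preference revelation game induced by the
mechanism `f` when the true preferences are `R`: no student can obtain a school he truly
strictly prefers by unilaterally changing his report. -/
def NashEq (R : I → Pref S) (f : (I → Pref S) → Matching I S) (Q : I → Pref S) : Prop :=
  ∀ (i : I) (Qi' : Pref S),
    (R i).rank (f Q i) ≤ (R i).rank (f (Function.update Q i Qi') i)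

/-- `μ` is a Nash equilibrium outcome of the revelation game induced by `f` at true
preferences `R`. -/
def NashOutcome (R : I → Pref S) (f : (I → Pref S) → Matching I S) (μ : Matching I S) : Prop :=
  ∃ Q, NashEq R f Q ∧ f Q = μ

/-- The preference `p` is aligned with the tier structure `t`: a (weakly) more preferred
school always lies in a weakly earlier tier. -/
def AlignedPref (t : S → ℕ) (p : Pref S) : Prop :=
  ∀ s s' : S, p.rank (some s) ≤ p.rank (some s') → t s ≤ t s'

/-- `p` lists exactly the school in `o` (if any) as acceptable. -/
def OnlyAcceptable (p : Pref S) (o : Option S) : Prop :=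
  ∀ s : S, (p.rank (some s) < p.rank none ↔ o = some s)

/-- An Ergin cycle of the priority structure among the schools in `A`. -/
def Cycle (E : Prio I S) (A : S → Prop) : Prop :=
  ∃ a b : S, A a ∧ A b ∧ a ≠ b ∧ ∃ i j k : I,
    E.higher a i j ∧ E.higher a j k ∧ E.higher b k i ∧
    ∃ Ia Ib : Finset I, Disjoint Ia Ib ∧
      (∀ l ∈ Ia, l ≠ i ∧ l ≠ j ∧ l ≠ k ∧ E.higher a l j) ∧
      (∀ l ∈ Ib, l ≠ i ∧ l ≠ j ∧ l ≠ k ∧ E.higher b l i) ∧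
      Ia.card = E.quota a - 1 ∧ Ib.card = E.quota b - 1

/-- Within-tier acyclicity of a generalized priority structure: no Ergin cycle among the
schools of any single tier. -/
def WithinTierAcyclic (E : Prio I S) (t : S → ℕ) : Prop :=
  ∀ k : ℕ, ¬ Cycle E (fun s => t s = k)

/-- The (strict) preference `pr` of school `s` over sets of students is a responsive
extension of its priorities. -/
def Responsive (E : Prio I S) (s : S) (pr : Finset I → Finset I → Prop) : Prop :=
  ∀ (J : Finset I) (i j : I), i ∉ J → j ∉ J → E.higher s i j →
    pr (insert i J) (insert j J)

/-- `t` is a refinement of `t'`: `t'` ranks `a` in a strictly later tier than `b` only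
if `t` does. -/
def Refines (t t' : S → ℕ) : Prop :=
  ∀ a b : S, t' b < t' a → t b < t a


/-! ### Auxiliary development: an explicit deferred-acceptance algorithm -/

section AlgAux

variable (E : Prio I S) (R : I → Pref S)

/-- Candidate schools for student `i` given the rejection sets `D`. -/
def cand (D : I → Finset S) (i : I) : Finset S :=
  Finset.univ.filter (fun s => (R i).rank (some s) < (R i).rank none ∧ s ∉ D i)

/-- Current proposal of student `i`. -/
noncomputable def aprop (D : I → Finset S) (i : I) : Option S :=
  if h : (cand R D i).Nonempty then
    some (Finset.exists_min_image (cand R D i) (fun s => (R i).rank (some s)) h).choose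
  else none

lemma aprop_spec {D : I → Finset S} {i : I} {s : S} (h : aprop R D i = some s) :
    s ∈ cand R D i ∧ ∀ s' ∈ cand R D i, (R i).rank (some s) ≤ (R i).rank (some s') := by
  unfold aprop at h
  split at h
  · next hne =>
    obtain ⟨hmem, hmin⟩ :=
      (Finset.exists_min_image (cand R D i) (fun s => (R i).rank (some s)) hne).choose_spec
    cases h
    exact ⟨hmem, hmin⟩
  · exact absurd h (by simp)

lemma aprop_none {D : I → Finset S} {i : I} (h : aprop R D i = none) :
    ∀ s : S, (R i).rank (some s) < (R i).rank none → s ∈ D i := by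
  intro s hs
  by_contra hD
  have hmem : s ∈ cand R D i := by simp [cand, hs, hD]
  unfold aprop at h
  rw [dif_pos ⟨s, hmem⟩] at h
  cases h

lemma aprop_congr {D D' : I → Finset S} {i : I} (h : D i = D' i) :
    aprop R D i = aprop R D' i := by
  unfold aprop cand
  simp only [h]

lemma aprop_rank_mono {D D' : I → Finset S} (hDD : ∀ j, D j ⊆ D' j) (i : I) :
    (R i).rank (aprop R D i) ≤ (R i).rank (aprop R D' i) := by
  cases h' : aprop R D' i with
  | some s' =>
    have hmem := (aprop_spec R h').1
    simp only [cand, Finset.mem_filter] at hmem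
    have hmem' : s' ∈ cand R D i := by
      simp only [cand, Finset.mem_filter, Finset.mem_univ, true_and]
      exact ⟨hmem.2.1, fun hc => hmem.2.2 (hDD i hc)⟩
    cases h : aprop R D i with
    | some m => exact (aprop_spec R h).2 s' hmem'
    | none =>
      exact absurd (hDD i (aprop_none R h s' hmem.2.1)) hmem.2.2
  | none =>
    cases h : aprop R D i with
    | some m =>
      have := (aprop_spec R h).1
      simp only [cand, Finset.mem_filter] at this
      exact this.2.1.le
    | none => exact le_rfl

/-- Position (by priority) of `j` among `P` at school `s`. -/
def pkr (s : S) (P : Finset I) (j : I) : ℕ :=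
  (P.filter (fun l => E.prank s l ≤ E.prank s j)).card

/-- The members of `P` kept by school `s` (its `quota s` best members). -/
def keptOf (s : S) (P : Finset I) : Finset I :=
  P.filter (fun j => pkr E s P j ≤ E.quota s)

lemma pkr_lt_of_lt {s : S} {P : Finset I} {j l : I} (hj : j ∈ P) (hl : l ∈ P)
    (h : E.prank s j < E.prank s l) : pkr E s P j < pkr E s P l := by
  apply Finset.card_lt_card
  constructor
  · intro m hm
    simp only [Finset.mem_filter] at hm ⊢
    exact ⟨hm.1, hm.2.trans h.le⟩
  · intro hsub
    have : l ∈ P.filter (fun m => E.prank s m ≤ E.prank s l) := by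
      simp [hl]
    have := hsub this
    simp only [Finset.mem_filter] at this
    omega

lemma pkr_lt_iff {s : S} {P : Finset I} {j l : I} (hj : j ∈ P) (hl : l ∈ P) :
    pkr E s P j < pkr E s P l ↔ E.prank s j < E.prank s l := by
  constructor
  · intro h
    rcases lt_trichotomy (E.prank s j) (E.prank s l) with h1 | h1 | h1
    · exact h1
    · exact absurd h (by rw [E.inj s h1]; omega)
    · exact absurd (pkr_lt_of_lt E hl hj h1) (by omega)
  · exact pkr_lt_of_lt E hj hl

lemma pkr_injOn {s : S} {P : Finset I} : Set.InjOn (pkr E s P) P := by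
  intro j hj l hl h
  by_contra hne
  rcases lt_trichotomy (E.prank s j) (E.prank s l) with h1 | h1 | h1
  · exact absurd (pkr_lt_of_lt E hj hl h1) (by omega)
  · exact hne (E.inj s h1)
  · exact absurd (pkr_lt_of_lt E hl hj h1) (by omega)

lemma pkr_mem_Icc {s : S} {P : Finset I} {j : I} (hj : j ∈ P) :
    pkr E s P j ∈ Finset.Icc 1 P.card := by
  simp only [Finset.mem_Icc]
  constructor
  · have : j ∈ P.filter (fun l => E.prank s l ≤ E.prank s j) := by simp [hj]
    have := Finset.card_pos.mpr ⟨j, this⟩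
    exact this
  · exact Finset.card_le_card (Finset.filter_subset _ _)

lemma pkr_image {s : S} (P : Finset I) :
    P.image (pkr E s P) = Finset.Icc 1 P.card := by
  apply Finset.eq_of_subset_of_card_le
  · intro v hv
    simp only [Finset.mem_image] at hv
    obtain ⟨j, hj, rfl⟩ := hv
    exact pkr_mem_Icc E hj
  · rw [Finset.card_image_of_injOn (pkr_injOn E), Nat.card_Icc]
    omega

lemma keptOf_subset {s : S} {P : Finset I} : keptOf E s P ⊆ P :=
  Finset.filter_subset _ _

lemma keptOf_card {s : S} (P : Finset I) :
    (keptOf E s P).card = min (E.quota s) P.card := by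
  have hinj : Set.InjOn (pkr E s P) (P.filter (fun j => pkr E s P j ≤ E.quota s)) :=
    (pkr_injOn E).mono (by exact_mod_cast Finset.filter_subset _ _)
  have h2 : (keptOf E s P).card
      = ((P.image (pkr E s P)).filter (fun v => v ≤ E.quota s)).card := by
    rw [Finset.filter_image, keptOf, Finset.card_image_of_injOn hinj]
  rw [h2, pkr_image]
  have h3 : (Finset.Icc 1 P.card).filter (fun v => v ≤ E.quota s)
      = Finset.Icc 1 (min (E.quota s) P.card) := by
    ext v
    simp only [Finset.mem_filter, Finset.mem_Icc]
    omega
  rw [h3, Nat.card_Icc]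
  omega

lemma keptOf_eq_of_le {s : S} {P : Finset I} (h : P.card ≤ E.quota s) :
    keptOf E s P = P := by
  apply Finset.filter_true_of_mem
  intro j hj
  have hm := pkr_mem_Icc (E := E) (s := s) hj
  rw [Finset.mem_Icc] at hm
  omega

lemma card_gt_of_not_kept {s : S} {P : Finset I} {j : I} (hj : j ∈ P)
    (hjk : j ∉ keptOf E s P) : E.quota s < P.card := by
  by_contra h
  rw [keptOf_eq_of_le E (by omega)] at hjk
  exact hjk hj

lemma keptOf_lt {s : S} {P : Finset I} {j l : I} (hj : j ∈ P) (hjk : j ∉ keptOf E s P)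
    (hl : l ∈ keptOf E s P) : E.prank s l < E.prank s j := by
  simp only [keptOf, Finset.mem_filter, not_and] at hjk hl
  have := hjk hj
  exact (pkr_lt_iff E hl.1 hj).mp (by omega)

/-- Students currently proposing to `s`. -/
noncomputable def pros (D : I → Finset S) (s : S) : Finset I :=
  Finset.univ.filter (fun j => aprop R D j = some s)

noncomputable def kept (D : I → Finset S) (s : S) : Finset I :=
  keptOf E s (pros R D s)

/-- One parallel round of deferred acceptance: rejected students add the rejecting
school to their rejection set. -/
noncomputable def Dstep (D : I → Finset S) : I → Finset S := fun j =>
  (aprop R D j).elim (D j) (fun s => if j ∈ kept E R D s then D j else insert s (D j))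

lemma Dstep_subset (D : I → Finset S) (j : I) : D j ⊆ Dstep E R D j := by
  unfold Dstep
  cases h : aprop R D j with
  | none => simp
  | some s =>
    simp only [Option.elim_some]
    by_cases hk : j ∈ kept E R D s
    · rw [if_pos hk]
    · rw [if_neg hk]
      exact Finset.subset_insert _ _

lemma mem_Dstep {D : I → Finset S} {j : I} {s : S} :
    s ∈ Dstep E R D j ↔ s ∈ D j ∨ (aprop R D j = some s ∧ j ∉ kept E R D s) := by
  unfold Dstep
  cases h : aprop R D j with
  | none => simp
  | some s₀ =>
    simp only [Option.elim_some, Option.some.injEq]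
    by_cases hk : j ∈ kept E R D s₀
    · rw [if_pos hk]
      constructor
      · exact Or.inl
      · rintro (h1 | ⟨rfl, h2⟩)
        · exact h1
        · exact absurd hk h2
    · rw [if_neg hk]
      rw [Finset.mem_insert]
      constructor
      · rintro (rfl | h1)
        · exact Or.inr ⟨rfl, hk⟩
        · exact Or.inl h1
      · rintro (h1 | ⟨rfl, h2⟩)
        · exact Or.inr h1
        · exact Or.inl rfl

lemma kept_prop {D : I → Finset S} {s : S} {j : I} (h : j ∈ kept E R D s) :
    Dstep E R D j = D j ∧ aprop R (Dstep E R D) j = some s := by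
  have hj : j ∈ pros R D s := keptOf_subset E h
  simp only [pros, Finset.mem_filter] at hj
  have hD : Dstep E R D j = D j := by
    unfold Dstep
    rw [hj.2]
    simp [h]

  exact ⟨hD, by rw [aprop_congr R hD]; exact hj.2⟩

noncomputable def Dseq : ℕ → I → Finset S := fun n => (Dstep E R)^[n] (fun _ => ∅)

lemma Dseq_zero : Dseq E R 0 = fun _ => (∅ : Finset S) := rfl

lemma Dseq_succ (n : ℕ) : Dseq E R (n + 1) = Dstep E R (Dseq E R n) := by
  unfold Dseq
  rw [Function.iterate_succ_apply']

lemma Dseq_le {m n : ℕ} (h : m ≤ n) (j : I) : Dseq E R m j ⊆ Dseq E R n j := by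
  induction n with
  | zero =>
    have hm : m = 0 := by omega
    subst hm; exact subset_rfl
  | succ n ih =>
    rcases Nat.lt_or_ge m (n + 1) with h1 | h1
    · refine (ih (by omega)).trans ?_
      rw [Dseq_succ]
      exact Dstep_subset E R _ j
    · have hm : m = n + 1 := by omega
      subst hm; exact subset_rfl

/-- The number of rounds guaranteeing a fixed point. -/
noncomputable def Dfix : I → Finset S := Dseq E R (Fintype.card I * Fintype.card S)

lemma Dfix_fixed : Dstep E R (Dfix E R) = Dfix E R := by
  set N := Fintype.card I * Fintype.card S with hN
  by_contra hne
  have hnofix : ∀ m ≤ N, Dstep E R (Dseq E R m) ≠ Dseq E R m := by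
    intro m hm hfix
    apply hne
    have : ∀ p, Dseq E R (m + p) = Dseq E R m := by
      intro p
      induction p with
      | zero => rfl
      | succ p ih => rw [show m + (p+1) = (m+p) + 1 by omega, Dseq_succ, ih, hfix]
    have h1 := this (N - m)
    rw [show m + (N - m) = N by omega] at h1
    show Dstep E R (Dseq E R N) = Dseq E R N
    rw [h1, hfix]
  have hsum : ∀ m ≤ N + 1, m ≤ ∑ j : I, (Dseq E R m j).card := by
    intro m hm
    induction m with
    | zero => omega
    | succ m ih =>
      have h1 : m ≤ ∑ j : I, (Dseq E R m j).card := ih (by omega)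
      have h2 : ∑ j : I, (Dseq E R m j).card < ∑ j : I, (Dseq E R (m+1) j).card := by
        rw [Dseq_succ]
        have hne' := hnofix m (by omega)
        have : ∃ j, Dseq E R m j ≠ Dstep E R (Dseq E R m) j := by
          by_contra hc
          push_neg at hc
          exact hne' (funext fun j => (hc j).symm)
        obtain ⟨j₀, hj₀⟩ := this
        apply Finset.sum_lt_sum
        · intro j _
          exact Finset.card_le_card (Dstep_subset E R _ j)
        · exact ⟨j₀, Finset.mem_univ _, Finset.card_lt_card
            (Finset.ssubset_iff_subset_ne.mpr ⟨Dstep_subset E R _ j₀, hj₀⟩)⟩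
      omega
  have h1 := hsum (N + 1) le_rfl
  have h2 : ∑ j : I, (Dseq E R (N+1) j).card ≤ N := by
    rw [hN]
    calc ∑ j : I, (Dseq E R (N+1) j).card ≤ ∑ _j : I, Fintype.card S := by
          apply Finset.sum_le_sum
          intro j _
          exact (Finset.card_le_card (Finset.subset_univ _)).trans (by simp)
      _ = Fintype.card I * Fintype.card S := by
          simp [Finset.sum_const, mul_comm]
  omega

lemma Dseq_subset_Dfix (n : ℕ) (j : I) : Dseq E R n j ⊆ Dfix E R j := by
  set N := Fintype.card I * Fintype.card S with hN
  rcases le_total n N with h | h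
  · exact Dseq_le E R h j
  · have : ∀ p, Dseq E R (N + p) = Dseq E R N := by
      intro p
      induction p with
      | zero => rfl
      | succ p ih => rw [show N + (p+1) = (N+p) + 1 by omega, Dseq_succ, ih]
                     exact Dfix_fixed E R
    have h1 := this (n - N)
    rw [show N + (n - N) = n by omega] at h1
    rw [h1]
    exact subset_rfl

/-- The outcome of the deferred-acceptance algorithm. -/
noncomputable def mualg : Matching I S := fun i => aprop R (Dfix E R) i

lemma assigned_mualg (s : S) : assigned (mualg E R) s = pros R (Dfix E R) s := rfl

lemma fix_kept {j : I} {s : S} (h : aprop R (Dfix E R) j = some s) :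
    j ∈ kept E R (Dfix E R) s := by
  by_contra hk
  have : s ∈ Dstep E R (Dfix E R) j := (mem_Dstep E R).mpr (Or.inr ⟨h, hk⟩)
  rw [Dfix_fixed] at this
  have hmem := (aprop_spec R h).1
  simp only [cand, Finset.mem_filter] at hmem
  exact hmem.2.2 this

lemma mualg_feasible : Feasible E (mualg E R) := by
  intro s
  rw [assigned_mualg]
  have hsub : pros R (Dfix E R) s ⊆ kept E R (Dfix E R) s := by
    intro j hj
    simp only [pros, Finset.mem_filter] at hj
    exact fix_kept E R hj.2
  calc (pros R (Dfix E R) s).card ≤ (kept E R (Dfix E R) s).card := Finset.card_le_card hsub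
    _ ≤ E.quota s := by rw [kept, keptOf_card]; omega

lemma mualg_IR : IndivRat R (mualg E R) := by
  intro i
  cases h : mualg E R i with
  | none => exact le_rfl
  | some s =>
    have hmem := (aprop_spec R h).1
    simp only [cand, Finset.mem_filter] at hmem
    exact hmem.2.1.le

instance (E : Prio I S) (s : S) (i j : I) : Decidable (E.higher s i j) :=
  inferInstanceAs (Decidable (E.prank s i < E.prank s j))

/-- The key invariant: a rejected student always sees quota-many better-ranked
current proposers at the rejecting school. -/
def AInv (D : I → Finset S) : Prop :=
  ∀ j s, s ∈ D j → E.quota s ≤ ((pros R D s).filter (fun l => E.higher s l j)).card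

lemma ainv_step {D : I → Finset S} (h : AInv E R D) : AInv E R (Dstep E R D) := by
  intro j s hs
  have hkept_sub : ∀ l ∈ kept E R D s, l ∈ pros R (Dstep E R D) s := by
    intro l hl
    simp only [pros, Finset.mem_filter, Finset.mem_univ, true_and]
    exact (kept_prop E R hl).2
  rw [mem_Dstep] at hs
  rcases hs with hold | ⟨hpj, hjk⟩
  · have hOld := h j s hold
    by_cases hc : (pros R D s).card ≤ E.quota s
    · have hkeq : kept E R D s = pros R D s := keptOf_eq_of_le E hc
      refine le_trans hOld (Finset.card_le_card ?_)
      intro l hl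
      simp only [Finset.mem_filter] at hl ⊢
      exact ⟨hkept_sub l (hkeq ▸ hl.1), hl.2⟩
    · push_neg at hc
      by_cases hOK : ∃ g ∈ (pros R D s).filter (fun l => E.higher s l j), g ∉ kept E R D s
      · obtain ⟨g, hg, hgk⟩ := hOK
        simp only [Finset.mem_filter] at hg
        have hsub : kept E R D s ⊆ (pros R (Dstep E R D) s).filter (fun l => E.higher s l j) := by
          intro l hl
          simp only [Finset.mem_filter]
          refine ⟨hkept_sub l hl, ?_⟩
          have h1 := keptOf_lt E hg.1 hgk hl
          have h2 := hg.2
          unfold Prio.higher at h2 ⊢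
          omega
        calc E.quota s = (kept E R D s).card := by rw [kept, keptOf_card]; omega
          _ ≤ _ := Finset.card_le_card hsub
      · push_neg at hOK
        refine le_trans hOld (Finset.card_le_card ?_)
        intro l hl
        have hlk := hOK l hl
        simp only [Finset.mem_filter] at hl ⊢
        exact ⟨hkept_sub l hlk, hl.2⟩
  · have hjP : j ∈ pros R D s := by simp [pros, hpj]
    have hq := card_gt_of_not_kept E hjP hjk
    have hsub : kept E R D s ⊆ (pros R (Dstep E R D) s).filter (fun l => E.higher s l j) := by
      intro l hl
      simp only [Finset.mem_filter]
      exact ⟨hkept_sub l hl, keptOf_lt E hjP hjk hl⟩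
    calc E.quota s = (kept E R D s).card := by rw [kept, keptOf_card]; omega
      _ ≤ _ := Finset.card_le_card hsub

lemma ainv_Dseq (n : ℕ) : AInv E R (Dseq E R n) := by
  induction n with
  | zero => intro j s hs; simp [Dseq_zero] at hs
  | succ n ih => rw [Dseq_succ]; exact ainv_step E R ih

lemma ainv_Dfix : AInv E R (Dfix E R) := ainv_Dseq E R _

lemma blocked_deleted {i : I} {s : S}
    (h : (R i).rank (some s) < (R i).rank (mualg E R i)) : s ∈ Dfix E R i := by
  by_contra hD
  have hacc : (R i).rank (some s) < (R i).rank none := lt_of_lt_of_le h (mualg_IR E R i)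
  have hc : s ∈ cand R (Dfix E R) i := by simp [cand, hacc, hD]
  cases hp : aprop R (Dfix E R) i with
  | none => exact hD (aprop_none R hp s hacc)
  | some m =>
    have hmin := (aprop_spec R hp).2 s hc
    have : mualg E R i = some m := hp
    rw [this] at h
    omega

lemma mualg_no_blocks : ∀ i s, ¬ Blocks E R (mualg E R) i s := by
  rintro i s ⟨hpref, hcond⟩
  have hdel := blocked_deleted E R hpref
  have hinv := ainv_Dfix E R i s hdel
  have hFsub : (pros R (Dfix E R) s).filter (fun l => E.higher s l i) ⊆ assigned (mualg E R) s := by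
    rw [assigned_mualg]; exact Finset.filter_subset _ _
  have hfe := mualg_feasible E R s
  have hFeq : (pros R (Dfix E R) s).filter (fun l => E.higher s l i) = assigned (mualg E R) s :=
    Finset.eq_of_subset_of_card_le hFsub (hfe.trans hinv)
  rcases hcond with hlt | ⟨j, hj, hij⟩
  · have := Finset.card_le_card hFsub
    omega
  · have hjA : j ∈ assigned (mualg E R) s := by simp [assigned, hj]
    rw [← hFeq, Finset.mem_filter] at hjA
    have := hjA.2
    unfold Prio.higher at this hij
    omega

lemma mualg_stable : Stable E R (mualg E R) :=
  ⟨mualg_feasible E R, mualg_IR E R, mualg_no_blocks E R⟩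

lemma opt_Dseq : ∀ n, ∀ ν, Stable E R ν → ∀ j s, s ∈ Dseq E R n j → ν j ≠ some s := by
  intro n
  induction n with
  | zero => intro ν hν j s hs; simp [Dseq_zero] at hs
  | succ n ih =>
    intro ν hν j s hs
    rw [Dseq_succ, mem_Dstep] at hs
    rcases hs with hold | ⟨hpj, hjk⟩
    · exact ih ν hν j s hold
    · intro hνj
      have hjP : j ∈ pros R (Dseq E R n) s := by simp [pros, hpj]
      have hqP := card_gt_of_not_kept E hjP hjk
      have hKcard : (kept E R (Dseq E R n) s).card = E.quota s := by
        rw [kept, keptOf_card]; omega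
      have hex : ∃ l ∈ kept E R (Dseq E R n) s, ν l ≠ some s := by
        by_contra hAll
        push_neg at hAll
        have hsub : insert j (kept E R (Dseq E R n) s) ⊆ assigned ν s := by
          intro l hl
          rcases Finset.mem_insert.mp hl with rfl | hl
          · simp [assigned, hνj]
          · simp [assigned, hAll l hl]
        have h1 : (insert j (kept E R (Dseq E R n) s)).card = E.quota s + 1 := by
          rw [Finset.card_insert_of_notMem hjk, hKcard]
        have h2 := Finset.card_le_card hsub
        have h3 := hν.1 s
        omega
      obtain ⟨l, hlk, hlne⟩ := hex
      have hlP : l ∈ pros R (Dseq E R n) s := keptOf_subset E hlk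
      simp only [pros, Finset.mem_filter, Finset.mem_univ, true_and] at hlP
      have hlc := (aprop_spec R hlP).1
      simp only [cand, Finset.mem_filter] at hlc
      have hlt : (R l).rank (some s) < (R l).rank (ν l) := by
        cases hν' : ν l with
        | none => exact hlc.2.1
        | some a =>
          rcases lt_trichotomy ((R l).rank (some a)) ((R l).rank (some s)) with h1 | h1 | h1
          · by_cases hmem : a ∈ Dseq E R n l
            · exact absurd hν' (ih ν hν l a hmem)
            · have : a ∈ cand R (Dseq E R n) l := by
                simp only [cand, Finset.mem_filter, Finset.mem_univ, true_and]
                exact ⟨h1.trans hlc.2.1, hmem⟩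
              have := (aprop_spec R hlP).2 a this
              omega
          · exact absurd (hν'.trans ((R l).inj h1)) hlne
          · exact h1
      have hhigher : E.higher s l j := keptOf_lt E hjP hjk hlk
      exact hν.2.2 l s ⟨hlt, Or.inr ⟨j, hνj, hhigher⟩⟩

lemma mualg_opt : ∀ ν, Stable E R ν → ∀ i, (R i).rank (mualg E R i) ≤ (R i).rank (ν i) := by
  intro ν hν i
  cases hνi : ν i with
  | none => exact mualg_IR E R i
  | some a =>
    have hnd : a ∉ Dfix E R i := fun hmem => opt_Dseq E R _ ν hν i a hmem hνi
    have hacc : (R i).rank (some a) < (R i).rank none := by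
      have h1 := hν.2.1 i
      rw [hνi] at h1
      rcases lt_or_eq_of_le h1 with h | h
      · exact h
      · exact absurd ((R i).inj h) (by simp)
    have hc : a ∈ cand R (Dfix E R) i := by simp [cand, hacc, hnd]
    cases hp : aprop R (Dfix E R) i with
    | none => exact absurd (aprop_none R hp a hacc) hnd
    | some m =>
      have := (aprop_spec R hp).2 a hc
      show (R i).rank (aprop R (Dfix E R) i) ≤ _
      rw [hp]
      exact this

theorem exists_SO : ∃ μ, StudentOptimal E R μ :=
  ⟨mualg E R, mualg_stable E R, mualg_opt E R⟩

theorem SO_unique {μ ν : Matching I S} (hμ : StudentOptimal E R μ)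
    (hν : StudentOptimal E R ν) : μ = ν :=
  funext fun i => (R i).inj (le_antisymm (hμ.2 ν hν.1 i) (hν.2 μ hμ.1 i))

theorem DA_SO : StudentOptimal E R (DA E R) := by
  have h : ∃ μ, StudentOptimal E R μ := exists_SO E R
  unfold DA
  rw [dif_pos h]
  exact h.choose_spec

theorem DA_eq : DA E R = mualg E R :=
  SO_unique E R (DA_SO E R) ⟨mualg_stable E R, mualg_opt E R⟩

end AlgAux

section SPAux

/-- A preference listing only `b` as acceptable. -/
noncomputable def onlyPref (b : S) : Pref S where
  rank x := Option.elim x 1 (fun s => if s = b then 0 else 2 + ((Fintype.equivFin S) s : ℕ))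
  inj := by
    intro x y h
    cases x with
    | none =>
      cases y with
      | none => rfl
      | some s' =>
        simp only [Option.elim_none, Option.elim_some] at h
        split at h <;> omega
    | some s =>
      cases y with
      | none =>
        simp only [Option.elim_none, Option.elim_some] at h
        split at h <;> omega
      | some s' =>
        simp only [Option.elim_some] at h
        by_cases h1 : s = b <;> by_cases h2 : s' = b
        · rw [h1, h2]
        · rw [if_pos h1, if_neg h2] at h; omega
        · rw [if_neg h1, if_pos h2] at h; omega
        · rw [if_neg h1, if_neg h2] at h
          have h3 : (Fintype.equivFin S) s = (Fintype.equivFin S) s' := Fin.val_inj.mp (by omega)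
          rw [(Fintype.equivFin S).injective h3]

lemma blocks_congr {E : Prio I S} {R R' : I → Pref S} {μ : Matching I S} {j : I} {s : S}
    (h : R j = R' j) (hb : Blocks E R μ j s) : Blocks E R' μ j s := by
  unfold Blocks at hb ⊢
  rw [← h]
  exact hb

/-- Strategy-proofness of the deferred-acceptance (student-optimal stable) mechanism. -/
theorem DA_sp (E : Prio I S) (R : I → Pref S) (i : I) (Q' : Pref S) :
    (R i).rank (DA E R i) ≤ (R i).rank (DA E (Function.update R i Q') i) := by
  classical
  by_contra hcon
  push_neg at hcon
  set ν := DA E (Function.update R i Q') with hνdef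
  have hνSO := DA_SO E (Function.update R i Q')
  have hμSO := DA_SO E R
  have hμIR := hμSO.1.2.1 i
  cases hb : ν i with
  | none => rw [hb] at hcon; omega
  | some b =>
  rw [hb] at hcon
  have hDAeq : DA E R = mualg E R := DA_eq E R
  rw [hDAeq] at hcon hμIR
  have hbacc : (R i).rank (some b) < (R i).rank none := lt_of_lt_of_le hcon hμIR
  set Zp := Function.update R i (onlyPref b) with hZp
  have hlamSO := DA_SO E Zp
  set lam := DA E Zp with hlamdef
  -- ν is stable in the Z-market
  have hνZ : Stable E Zp ν := by
    refine ⟨hνSO.1.1, ?_, ?_⟩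
    · intro j
      by_cases hj : j = i
      · subst hj
        rw [hZp, Function.update_self, hb]
        simp [onlyPref]
      · rw [hZp, Function.update_of_ne hj]
        have h1 := hνSO.1.2.1 j
        rwa [Function.update_of_ne hj] at h1
    · intro j s hbl
      by_cases hj : j = i
      · subst hj
        have h1 := hbl.1
        rw [hZp, Function.update_self, hb] at h1
        simp only [onlyPref, Option.elim_some, if_pos rfl] at h1
        rcases h1 with ⟨⟩
      · exact hνSO.1.2.2 j s
          (blocks_congr (by rw [hZp, Function.update_of_ne hj, Function.update_of_ne hj]) hbl)
  have hlami : lam i = some b := by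
    have h1 := hlamSO.2 ν hνZ i
    rw [hZp, hb] at h1
    rw [Function.update_self] at h1
    apply (onlyPref b).inj
    have h0 : (onlyPref b).rank (some b) = 0 := by simp [onlyPref]
    omega
  -- the set of strict gainers
  set M' := Finset.univ.filter (fun j => (R j).rank (lam j) < (R j).rank (mualg E R j)) with hM'
  have hiM : i ∈ M' := by
    rw [hM', Finset.mem_filter]
    exact ⟨Finset.mem_univ _, by rw [hlami]; exact hcon⟩
  have hF1 : ∀ j ∈ M', ∃ w, lam j = some w ∧
      (R j).rank (some w) < (R j).rank (mualg E R j) ∧ w ∈ Dfix E R j := by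
    intro j hj
    rw [hM', Finset.mem_filter] at hj
    have hr := hj.2
    cases hl : lam j with
    | none =>
      rw [hl] at hr
      have h2 := mualg_IR E R j
      omega
    | some w =>
      rw [hl] at hr
      exact ⟨w, rfl, hr, blocked_deleted E R hr⟩
  set W := Finset.univ.filter (fun w => ∃ j, j ∈ M' ∧ lam j = some w) with hW
  have hF2 : ∀ w, ∀ j ∈ M', lam j = some w →
      (assigned (mualg E R) w).card = E.quota w ∧
      ∀ l ∈ assigned (mualg E R) w, E.higher w l j := by
    intro w j hj hljw
    obtain ⟨w', hw', hr, hdel⟩ := hF1 j hj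
    rw [hljw] at hw'
    injection hw' with hww
    subst hww
    have hinv := ainv_Dfix E R j w hdel
    have hFsub : (pros R (Dfix E R) w).filter (fun l => E.higher w l j)
        ⊆ assigned (mualg E R) w := by
      rw [assigned_mualg]
      exact Finset.filter_subset _ _
    have hfe := mualg_feasible E R w
    have hFeq := Finset.eq_of_subset_of_card_le hFsub (hfe.trans hinv)
    constructor
    · have h6 := Finset.card_le_card hFsub
      omega
    · intro l hl
      rw [← hFeq, Finset.mem_filter] at hl
      exact hl.2
  -- counting
  have hBM : ∀ w ∈ W, assigned (mualg E R) w \ assigned lam w ⊆ M' := by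
    intro w hw l hl
    rw [Finset.mem_sdiff] at hl
    obtain ⟨hl1, hl2⟩ := hl
    simp only [assigned, Finset.mem_filter, Finset.mem_univ, true_and] at hl1 hl2
    by_contra hlM
    rw [hM', Finset.mem_filter] at hlM
    simp only [Finset.mem_univ, true_and, not_lt] at hlM
    rw [hW, Finset.mem_filter] at hw
    obtain ⟨-, j, hjM, hjw⟩ := hw
    have hli : l ≠ i := by
      intro h
      subst h
      rw [hM', Finset.mem_filter] at hiM
      have := hiM.2
      omega
    have hne : lam l ≠ mualg E R l := by rw [hl1]; exact hl2
    have hpref : (Zp l).rank (some w) < (Zp l).rank (lam l) := by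
      rw [hZp, Function.update_of_ne hli, ← hl1]
      rcases lt_or_eq_of_le hlM with h | h
      · exact h
      · exact absurd ((R l).inj h).symm hne
    have hhigher := (hF2 w j hjM hjw).2 l (by simp [assigned, hl1])
    exact hlamSO.1.2.2 l w ⟨hpref, Or.inr ⟨j, hjw, hhigher⟩⟩
  have hMA : ∀ j ∈ M', ∃ w ∈ W, j ∈ assigned lam w \ assigned (mualg E R) w := by
    intro j hj
    obtain ⟨w, hlj, hr, hdel⟩ := hF1 j hj
    refine ⟨w, ?_, ?_⟩
    · rw [hW, Finset.mem_filter]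
      exact ⟨Finset.mem_univ _, j, hj, hlj⟩
    · rw [Finset.mem_sdiff]
      constructor
      · simp [assigned, hlj]
      · intro hmem
        simp only [assigned, Finset.mem_filter, Finset.mem_univ, true_and] at hmem
        have h7 := (hF2 w j hj hlj).2 j (by simp [assigned, hmem])
        unfold Prio.higher at h7
        omega
  have hABle : ∀ w ∈ W, (assigned lam w \ assigned (mualg E R) w).card
      ≤ (assigned (mualg E R) w \ assigned lam w).card := by
    intro w hw
    rw [hW, Finset.mem_filter] at hw
    obtain ⟨-, j, hjM, hjw⟩ := hw
    have h1 := (hF2 w j hjM hjw).1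
    have h2 := hlamSO.1.1 w
    have h3 := Finset.card_sdiff_add_card_inter (assigned lam w) (assigned (mualg E R) w)
    have h4 := Finset.card_sdiff_add_card_inter (assigned (mualg E R) w) (assigned lam w)
    rw [Finset.inter_comm] at h4
    omega
  have hdisjA : ∀ x ∈ W, ∀ y ∈ W, x ≠ y →
      Disjoint (assigned lam x \ assigned (mualg E R) x)
        (assigned lam y \ assigned (mualg E R) y) := by
    intro x _ y _ hxy
    rw [Finset.disjoint_left]
    intro a ha hay
    rw [Finset.mem_sdiff] at ha hay
    simp only [assigned, Finset.mem_filter, Finset.mem_univ, true_and] at ha hay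
    rw [ha.1] at hay
    exact hxy (Option.some.inj hay.1)
  have hdisjB : ∀ x ∈ W, ∀ y ∈ W, x ≠ y →
      Disjoint (assigned (mualg E R) x \ assigned lam x)
        (assigned (mualg E R) y \ assigned lam y) := by
    intro x _ y _ hxy
    rw [Finset.disjoint_left]
    intro a ha hay
    rw [Finset.mem_sdiff] at ha hay
    simp only [assigned, Finset.mem_filter, Finset.mem_univ, true_and] at ha hay
    rw [ha.1] at hay
    exact hxy (Option.some.inj hay.1)
  have hc1 : M'.card ≤ ∑ w ∈ W, (assigned lam w \ assigned (mualg E R) w).card := by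
    calc M'.card ≤ (W.biUnion (fun w => assigned lam w \ assigned (mualg E R) w)).card := by
          apply Finset.card_le_card
          intro j hj
          obtain ⟨w, hwW, hmem⟩ := hMA j hj
          exact Finset.mem_biUnion.mpr ⟨w, hwW, hmem⟩
      _ ≤ _ := Finset.card_biUnion_le
  have hc2 : ∑ w ∈ W, (assigned (mualg E R) w \ assigned lam w).card ≤ M'.card := by
    rw [← Finset.card_biUnion hdisjB]
    apply Finset.card_le_card
    intro l hl
    rw [Finset.mem_biUnion] at hl
    obtain ⟨w, hwW, hmem⟩ := hl
    exact hBM w hwW hmem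
  have hc3 : ∑ w ∈ W, (assigned lam w \ assigned (mualg E R) w).card
      ≤ ∑ w ∈ W, (assigned (mualg E R) w \ assigned lam w).card :=
    Finset.sum_le_sum hABle
  have hAB_eq : ∀ w ∈ W, (assigned lam w \ assigned (mualg E R) w).card
      = (assigned (mualg E R) w \ assigned lam w).card := by
    by_contra hne
    push_neg at hne
    obtain ⟨w₀, hw₀, hne₀⟩ := hne
    have hlt : (assigned lam w₀ \ assigned (mualg E R) w₀).card
        < (assigned (mualg E R) w₀ \ assigned lam w₀).card :=
      lt_of_le_of_ne (hABle w₀ hw₀) hne₀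
    have := Finset.sum_lt_sum (fun w hw => hABle w hw) ⟨w₀, hw₀, hlt⟩
    omega
  have hBun : W.biUnion (fun w => assigned (mualg E R) w \ assigned lam w) = M' := by
    apply Finset.eq_of_subset_of_card_le
    · intro l hl
      rw [Finset.mem_biUnion] at hl
      obtain ⟨w, hwW, hmem⟩ := hl
      exact hBM w hwW hmem
    · rw [Finset.card_biUnion hdisjB]
      omega
  have hMun : M' = W.biUnion (fun w => assigned lam w \ assigned (mualg E R) w) := by
    apply Finset.eq_of_subset_of_card_le
    · intro j hj
      obtain ⟨w, hwW, hmem⟩ := hMA j hj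
      exact Finset.mem_biUnion.mpr ⟨w, hwW, hmem⟩
    · rw [Finset.card_biUnion hdisjA]
      omega
  have hF5 : ∀ j ∈ M', ∃ w ∈ W, mualg E R j = some w := by
    intro j hj
    rw [← hBun, Finset.mem_biUnion] at hj
    obtain ⟨w, hwW, hmem⟩ := hj
    rw [Finset.mem_sdiff] at hmem
    have := hmem.1
    simp only [assigned, Finset.mem_filter, Finset.mem_univ, true_and] at this
    exact ⟨w, hwW, this⟩
  have hF6 : ∀ w ∈ W, assigned lam w \ assigned (mualg E R) w ⊆ M' := by
    intro w hw l hl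
    rw [hMun, Finset.mem_biUnion]
    exact ⟨w, hw, hl⟩
  -- the run-time argument
  have hpairT : ∀ j w, mualg E R j = some w → ∃ n, aprop R (Dseq E R n) j = some w :=
    fun j w h => ⟨Fintype.card I * Fintype.card S, h⟩
  set PW := (M' ×ˢ W).filter (fun p => ∃ n, aprop R (Dseq E R n) p.1 = some p.2) with hPW
  have hPWmem : ∀ j ∈ M', ∀ w ∈ W, (∃ n, aprop R (Dseq E R n) j = some w) → (j, w) ∈ PW := by
    intro j hj w hw hex
    rw [hPW, Finset.mem_filter]
    exact ⟨Finset.mem_product.mpr ⟨hj, hw⟩, hex⟩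
  have hne : PW.Nonempty := by
    obtain ⟨w, hwW, hμi⟩ := hF5 i hiM
    exact ⟨(i, w), hPWmem i hiM w hwW (hpairT i w hμi)⟩
  obtain ⟨p₀, hp₀, hmax⟩ := Finset.exists_max_image PW
    (fun p => if h : ∃ n, aprop R (Dseq E R n) p.1 = some p.2 then Nat.find h else 0) hne
  obtain ⟨j₀, w₀⟩ := p₀
  rw [hPW, Finset.mem_filter, Finset.mem_product] at hp₀
  obtain ⟨⟨hj₀M, hw₀W⟩, hex₀⟩ := hp₀
  set e' := Nat.find hex₀ with he'def
  have he'p : aprop R (Dseq E R e') j₀ = some w₀ := Nat.find_spec hex₀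
  have hfirst : ∀ m, m < e' → aprop R (Dseq E R m) j₀ ≠ some w₀ :=
    fun m hm => Nat.find_min hex₀ hm
  have hmax' : ∀ j ∈ M', ∀ w ∈ W, ∀ (hex : ∃ n, aprop R (Dseq E R n) j = some w),
      Nat.find hex ≤ e' := by
    intro j hj w hw hex
    have h1 := hmax (j, w) (hPWmem j hj w hw hex)
    dsimp only at h1
    rw [dif_pos hex, dif_pos hex₀] at h1
    exact h1
  have hμj₀ : mualg E R j₀ = some w₀ := by
    obtain ⟨v, hvW, hμv⟩ := hF5 j₀ hj₀M
    rcases eq_or_ne v w₀ with rfl | hvne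
    · exact hμv
    · exfalso
      have hm1 : (R j₀).rank (aprop R (Dseq E R e') j₀) ≤ (R j₀).rank (aprop R (Dfix E R) j₀) :=
        aprop_rank_mono R (fun j => Dseq_subset_Dfix E R e' j) j₀
      rw [he'p] at hm1
      have hm1' : (R j₀).rank (some w₀) ≤ (R j₀).rank (mualg E R j₀) := hm1
      rw [hμv] at hm1'
      have hlt : (R j₀).rank (some w₀) < (R j₀).rank (some v) := by
        rcases lt_or_eq_of_le hm1' with h | h
        · exact h
        · exact absurd (Option.some.inj ((R j₀).inj h)).symm hvne
      have hex1 := hpairT j₀ v hμv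
      have ht1 := hmax' j₀ hj₀M v hvW hex1
      have hsp1 := Nat.find_spec hex1
      have hm2 : (R j₀).rank (aprop R (Dseq E R (Nat.find hex1)) j₀)
          ≤ (R j₀).rank (aprop R (Dseq E R e') j₀) :=
        aprop_rank_mono R (fun j => Dseq_le E R ht1 j) j₀
      rw [hsp1, he'p] at hm2
      omega
  have hlamj₀ : lam j₀ ≠ some w₀ := by
    intro h
    rw [hM', Finset.mem_filter] at hj₀M
    have h8 := hj₀M.2
    rw [h, hμj₀] at h8
    omega
  have hj₀B : j₀ ∈ assigned (mualg E R) w₀ \ assigned lam w₀ := by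
    rw [Finset.mem_sdiff]
    constructor
    · simp [assigned, hμj₀]
    · simp [assigned, hlamj₀]
  have hAne : (assigned lam w₀ \ assigned (mualg E R) w₀).Nonempty := by
    have h1 := hAB_eq w₀ hw₀W
    have h2 : 0 < (assigned (mualg E R) w₀ \ assigned lam w₀).card :=
      Finset.card_pos.mpr ⟨j₀, hj₀B⟩
    exact Finset.card_pos.mp (by omega)
  obtain ⟨x, hxA⟩ := hAne
  have hxM : x ∈ M' := hF6 w₀ hw₀W hxA
  rw [Finset.mem_sdiff] at hxA
  have hxlam : lam x = some w₀ := by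
    have := hxA.1
    simpa [assigned] using this
  have hxdel : w₀ ∈ Dfix E R x ∧ (R x).rank (some w₀) < (R x).rank (mualg E R x) := by
    obtain ⟨w', hw', hr, hdel⟩ := hF1 x hxM
    rw [hxlam] at hw'
    injection hw' with hww
    subst hww
    exact ⟨hdel, hr⟩
  have hexx : ∃ n, w₀ ∈ Dseq E R n x := ⟨Fintype.card I * Fintype.card S, hxdel.1⟩
  set tx := Nat.find hexx with htxdef
  have htx1 : w₀ ∈ Dseq E R tx x := Nat.find_spec hexx
  have htx0 : ∀ m, m < tx → w₀ ∉ Dseq E R m x := fun m hm => Nat.find_min hexx hm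
  have htxpos : 1 ≤ tx := by
    rcases Nat.eq_zero_or_pos tx with h | h
    · rw [h] at htx1
      simp [Dseq_zero] at htx1
    · exact h
  have hw₀accx : (R x).rank (some w₀) < (R x).rank none :=
    lt_of_lt_of_le hxdel.2 (mualg_IR E R x)
  have htxe : tx ≤ e' := by
    by_contra hgt
    push_neg at hgt
    obtain ⟨vx, hvxW, hμx⟩ := hF5 x hxM
    have hex2 := hpairT x vx hμx
    have ht2 := hmax' x hxM vx hvxW hex2
    have hsp2 := Nat.find_spec hex2
    have hnd : w₀ ∉ Dseq E R (Nat.find hex2) x := htx0 _ (by omega)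
    have hc : w₀ ∈ cand R (Dseq E R (Nat.find hex2)) x := by
      simp [cand, hw₀accx, hnd]
    have h9 := (aprop_spec R hsp2).2 w₀ hc
    have hxr := hxdel.2
    rw [hμx] at hxr
    omega
  have he'pos : 1 ≤ e' := le_trans htxpos htxe
  have hDe' : Dseq E R e' = Dstep E R (Dseq E R (e' - 1)) := by
    conv_lhs => rw [show e' = (e' - 1) + 1 by omega]
    rw [Dseq_succ]
  have hK : (kept E R (Dseq E R (e'-1)) w₀).card = E.quota w₀ ∧
      ∀ y ∈ kept E R (Dseq E R (e'-1)) w₀, E.prank w₀ y < E.prank w₀ x := by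
    by_cases hcase : w₀ ∈ Dseq E R (e'-1) x
    · have hG := ainv_Dseq E R (e'-1) x w₀ hcase
      have hGsub : (pros R (Dseq E R (e'-1)) w₀).filter (fun l => E.higher w₀ l x)
          ⊆ pros R (Dseq E R (e'-1)) w₀ := Finset.filter_subset _ _
      have hcardP : E.quota w₀ ≤ (pros R (Dseq E R (e'-1)) w₀).card :=
        hG.trans (Finset.card_le_card hGsub)
      constructor
      · rw [kept, keptOf_card]
        omega
      · intro y hy
        by_cases hGK : ∃ g ∈ (pros R (Dseq E R (e'-1)) w₀).filter (fun l => E.higher w₀ l x),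
            g ∉ kept E R (Dseq E R (e'-1)) w₀
        · obtain ⟨g, hg, hgk⟩ := hGK
          rw [Finset.mem_filter] at hg
          have h1 := keptOf_lt E hg.1 hgk hy
          have h2 := hg.2
          unfold Prio.higher at h2
          omega
        · push_neg at hGK
          have hKle : (kept E R (Dseq E R (e'-1)) w₀).card ≤ E.quota w₀ := by
            rw [kept, keptOf_card]
            omega
          have hGeq := Finset.eq_of_subset_of_card_le hGK (hKle.trans hG)
          rw [← hGeq, Finset.mem_filter] at hy
          have h2 := hy.2
          unfold Prio.higher at h2
          exact h2
    · have htxe' : tx = e' := by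
        rcases Nat.lt_or_ge (e'-1) tx with h | h
        · omega
        · exact absurd (Dseq_le E R h x htx1) hcase
      have hmem : w₀ ∈ Dseq E R e' x := by
        rw [← htxe']
        exact htx1
      rw [hDe', mem_Dstep] at hmem
      rcases hmem with h | ⟨hpx, hxk⟩
      · exact absurd h hcase
      · have hxP : x ∈ pros R (Dseq E R (e'-1)) w₀ := by simp [pros, hpx]
        have hq := card_gt_of_not_kept E hxP hxk
        constructor
        · rw [kept, keptOf_card]
          omega
        · intro y hy
          exact keptOf_lt E hxP hxk hy
  have hKsub : ∀ y ∈ kept E R (Dseq E R (e'-1)) w₀, aprop R (Dseq E R e') y = some w₀ := by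
    intro y hy
    rw [hDe']
    exact (kept_prop E R hy).2
  have hj₀K : j₀ ∉ kept E R (Dseq E R (e'-1)) w₀ := by
    intro h
    have hmem := keptOf_subset E h
    simp only [pros, Finset.mem_filter, Finset.mem_univ, true_and] at hmem
    exact hfirst (e'-1) (by omega) hmem
  have hsub' : insert j₀ (kept E R (Dseq E R (e'-1)) w₀) ⊆ pros R (Dseq E R e') w₀ := by
    intro l hl
    rcases Finset.mem_insert.mp hl with rfl | hl
    · simp [pros, he'p]
    · simp only [pros, Finset.mem_filter, Finset.mem_univ, true_and]
      exact hKsub l hl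
  have hcard' : E.quota w₀ < (pros R (Dseq E R e') w₀).card := by
    have h1 := Finset.card_le_card hsub'
    rw [Finset.card_insert_of_notMem hj₀K, hK.1] at h1
    omega
  have hj₀K' : j₀ ∈ kept E R (Dseq E R e') w₀ := by
    by_contra hno
    have h10 : w₀ ∈ Dstep E R (Dseq E R e') j₀ := (mem_Dstep E R).mpr (Or.inr ⟨he'p, hno⟩)
    rw [← Dseq_succ] at h10
    have hdf : w₀ ∈ Dfix E R j₀ := Dseq_subset_Dfix E R (e'+1) j₀ h10
    have hcand := (aprop_spec R (show aprop R (Dfix E R) j₀ = some w₀ from hμj₀)).1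
    simp only [cand, Finset.mem_filter] at hcand
    exact hcand.2.2 hdf
  have hyex : ∃ y ∈ kept E R (Dseq E R (e'-1)) w₀, y ∉ kept E R (Dseq E R e') w₀ := by
    by_contra hall
    push_neg at hall
    have hcK' : (kept E R (Dseq E R e') w₀).card = E.quota w₀ := by
      rw [kept, keptOf_card]
      omega
    have heq := Finset.eq_of_subset_of_card_le hall (by rw [hcK', hK.1])
    rw [← heq] at hj₀K'
    exact hj₀K hj₀K'
  obtain ⟨y, hyK, hyK'⟩ := hyex
  have hylt : E.prank w₀ y < E.prank w₀ x := hK.2 y hyK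
  have hyprop : aprop R (Dseq E R e') y = some w₀ := hKsub y hyK
  have hydel : w₀ ∈ Dfix E R y := by
    have h10 : w₀ ∈ Dstep E R (Dseq E R e') y := (mem_Dstep E R).mpr (Or.inr ⟨hyprop, hyK'⟩)
    rw [← Dseq_succ] at h10
    exact Dseq_subset_Dfix E R (e'+1) y h10
  have hμy : mualg E R y ≠ some w₀ := by
    intro h
    have hcand := (aprop_spec R (show aprop R (Dfix E R) y = some w₀ from h)).1
    simp only [cand, Finset.mem_filter] at hcand
    exact hcand.2.2 hydel
  have hylt2 : (R y).rank (some w₀) < (R y).rank (mualg E R y) := by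
    have hm := aprop_rank_mono R (fun j => Dseq_subset_Dfix E R e' j) y
    rw [hyprop] at hm
    have hm' : (R y).rank (some w₀) ≤ (R y).rank (mualg E R y) := hm
    rcases lt_or_eq_of_le hm' with h | h
    · exact h
    · exact absurd ((R y).inj h).symm hμy
  by_cases hyM : y ∈ M'
  · obtain ⟨vy, hvyW, hμvy⟩ := hF5 y hyM
    have hex3 := hpairT y vy hμvy
    have ht3 := hmax' y hyM vy hvyW hex3
    have hsp3 := Nat.find_spec hex3
    have hm3 : (R y).rank (aprop R (Dseq E R (Nat.find hex3)) y)
        ≤ (R y).rank (aprop R (Dseq E R e') y) :=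
      aprop_rank_mono R (fun j => Dseq_le E R ht3 j) y
    rw [hsp3, hyprop] at hm3
    rw [hμvy] at hylt2
    omega
  · have hyi : y ≠ i := fun h => hyM (by rw [h]; exact hiM)
    have hynm : (R y).rank (mualg E R y) ≤ (R y).rank (lam y) := by
      rw [hM', Finset.mem_filter] at hyM
      simp only [Finset.mem_univ, true_and, not_lt] at hyM
      exact hyM
    refine hlamSO.1.2.2 y w₀ ⟨?_, Or.inr ⟨x, hxlam, ?_⟩⟩
    · rw [hZp, Function.update_of_ne hyi]
      omega
    · exact hylt

end SPAux


section EquivAux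

/-- Two preferences agreeing on the acceptable part (`none` and everything weakly above). -/
def EqAcc (p q : Pref S) : Prop :=
  (∀ x, p.rank x ≤ p.rank none ↔ q.rank x ≤ q.rank none) ∧
  ∀ x y, p.rank x ≤ p.rank none → p.rank y ≤ p.rank none →
    (p.rank x < p.rank y ↔ q.rank x < q.rank y)

lemma eqacc_refl (p : Pref S) : EqAcc p p := ⟨fun _ => Iff.rfl, fun _ _ _ _ => Iff.rfl⟩

lemma eqacc_symm {p q : Pref S} (h : EqAcc p q) : EqAcc q p := by
  refine ⟨fun x => (h.1 x).symm, fun x y hx hy => ?_⟩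
  exact (h.2 x y ((h.1 x).mpr hx) ((h.1 y).mpr hy)).symm

lemma stable_congr {E : Prio I S} {R R' : I → Pref S} (h : ∀ j, EqAcc (R j) (R' j))
    {μ : Matching I S} (hs : Stable E R μ) : Stable E R' μ := by
  refine ⟨hs.1, fun j => ((h j).1 (μ j)).mp (hs.2.1 j), ?_⟩
  intro j s hbl
  have hIR := hs.2.1 j
  have hμ' := ((h j).1 (μ j)).mp hIR
  have hsacc' : (R' j).rank (some s) ≤ (R' j).rank none := le_trans hbl.1.le hμ'
  have hsacc : (R j).rank (some s) ≤ (R j).rank none := ((h j).1 (some s)).mpr hsacc'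
  exact hs.2.2 j s ⟨((h j).2 (some s) (μ j) hsacc hIR).mpr hbl.1, hbl.2⟩

lemma SO_congr {E : Prio I S} {R R' : I → Pref S} (h : ∀ j, EqAcc (R j) (R' j))
    {μ : Matching I S} (hso : StudentOptimal E R μ) : StudentOptimal E R' μ := by
  refine ⟨stable_congr h hso.1, ?_⟩
  intro ν hν j
  have hν' : Stable E R ν := stable_congr (fun j => eqacc_symm (h j)) hν
  have h1 := hso.2 ν hν' j
  have hμacc := hso.1.2.1 j
  have hνacc := hν'.2.1 j
  by_contra hlt
  push_neg at hlt
  have h2 := ((h j).2 (ν j) (μ j) hνacc hμacc).mpr hlt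
  omega

lemma DA_congr {E : Prio I S} {R R' : I → Pref S} (h : ∀ j, EqAcc (R j) (R' j)) :
    DA E R = DA E R' :=
  SO_unique E R' (SO_congr h (DA_SO E R)) (DA_SO E R')

lemma trunc_rank_none (A : S → Prop) [DecidablePred A] (p : Pref S) :
    (trunc A p).rank none = p.rank none := by
  simp [trunc, goodB]

lemma trunc_rank_pos {A : S → Prop} [DecidablePred A] (p : Pref S) {s : S} (hA : A s) :
    (trunc A p).rank (some s) = p.rank (some s) := by
  simp [trunc, goodB, hA]

lemma trunc_rank_neg {A : S → Prop} [DecidablePred A] (p : Pref S) {s : S} (hA : ¬ A s) :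
    (trunc A p).rank (some s) = bnd p + p.rank (some s) := by
  simp [trunc, goodB, hA]

lemma trunc_acc_iff (A : S → Prop) [DecidablePred A] (p : Pref S) (s : S) :
    (trunc A p).rank (some s) < (trunc A p).rank none ↔
      A s ∧ p.rank (some s) < p.rank none := by
  by_cases hA : A s
  · rw [trunc_rank_pos p hA, trunc_rank_none]
    simp [hA]
  · rw [trunc_rank_neg p hA, trunc_rank_none]
    have := rank_lt_bnd p none
    simp only [hA, false_and, iff_false, not_lt]
    omega

lemma trunc_accle_iff (A : S → Prop) [DecidablePred A] (p : Pref S) (x : Option S) :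
    (trunc A p).rank x ≤ (trunc A p).rank none ↔
      x = none ∨ ∃ s, x = some s ∧ A s ∧ p.rank (some s) < p.rank none := by
  cases x with
  | none => simp
  | some s =>
    have hinj : (trunc A p).rank (some s) ≠ (trunc A p).rank none := by
      intro h
      exact absurd ((trunc A p).inj h) (by simp)
    constructor
    · intro h
      have hlt : (trunc A p).rank (some s) < (trunc A p).rank none := by omega
      exact Or.inr ⟨s, rfl, (trunc_acc_iff A p s).mp hlt⟩
    · rintro (h | ⟨s', hs', hA, hac⟩)
      · exact absurd h (by simp)
      · injection hs' with hss
        subst hss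
        exact ((trunc_acc_iff A p s).mpr ⟨hA, hac⟩).le

lemma eqacc_trunc {A : S → Prop} [DecidablePred A] {p q : Pref S}
    (h : ∀ x y : Option S, (∀ s1, x = some s1 → A s1) → (∀ s2, y = some s2 → A s2) →
      (p.rank x < p.rank y ↔ q.rank x < q.rank y)) :
    EqAcc (trunc A p) (trunc A q) := by
  have hgood : ∀ (r : Pref S) (x : Option S),
      (∀ s1, x = some s1 → A s1) → (trunc A r).rank x = r.rank x := by
    intro r x hx
    cases x with
    | none => exact trunc_rank_none A r
    | some s => exact trunc_rank_pos r (hx s rfl)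
  constructor
  · intro x
    rw [trunc_accle_iff, trunc_accle_iff]
    cases x with
    | none => simp
    | some s =>
      constructor
      · rintro (h1 | ⟨s', hs', hA, hac⟩)
        · exact absurd h1 (by simp)
        · injection hs' with hss
          subst hss
          refine Or.inr ⟨s, rfl, hA, ?_⟩
          exact (h (some s) none (fun s1 h1 => by injection h1 with h2; rwa [← h2])
            (fun s2 h2 => by cases h2)).mp hac
      · rintro (h1 | ⟨s', hs', hA, hac⟩)
        · exact absurd h1 (by simp)
        · injection hs' with hss
          subst hss
          refine Or.inr ⟨s, rfl, hA, ?_⟩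
          exact (h (some s) none (fun s1 h1 => by injection h1 with h2; rwa [← h2])
            (fun s2 h2 => by cases h2)).mpr hac
  · intro x y hx hy
    rw [trunc_accle_iff] at hx hy
    have hx' : ∀ s1, x = some s1 → A s1 := by
      rcases hx with rfl | ⟨s', rfl, hA, -⟩
      · intro s1 h1; cases h1
      · intro s1 h1; injection h1 with h2; rwa [← h2]
    have hy' : ∀ s2, y = some s2 → A s2 := by
      rcases hy with rfl | ⟨s', rfl, hA, -⟩
      · intro s2 h2; cases h2
      · intro s2 h2; injection h2 with h3; rwa [← h3]
    rw [hgood p x hx', hgood p y hy', hgood q x hx', hgood q y hy']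
    exact h x y hx' hy'

lemma eqacc_truncFalse (p q : Pref S) :
    EqAcc (trunc (fun _ => False) p) (trunc (fun _ => False) q) := by
  constructor
  · intro x
    rw [trunc_accle_iff, trunc_accle_iff]
    simp
  · intro x y hx hy
    rw [trunc_accle_iff] at hx hy
    simp only [false_and, and_false, exists_false, or_false] at hx hy
    subst hx
    subst hy
    simp

lemma TDAaux_succ (E : Prio I S) (t : S → ℕ) (Q : I → Pref S) (n : ℕ) (j : I) :
    TDAaux E t Q (n+1) j =
      match TDAaux E t Q n j with
      | some s0 => some s0
      | none => DA E (fun j' => if TDAaux E t Q n j' = none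
          then trunc (fun s1 => t s1 = n + 1) (Q j') else trunc (fun _ => False) (Q j')) j := rfl

lemma TDAaux_none {E : Prio I S} {t : S → ℕ} {Q : I → Pref S} {n : ℕ} {j : I}
    (h : TDAaux E t Q n j = none) :
    TDAaux E t Q (n+1) j = DA E (fun j' => if TDAaux E t Q n j' = none
      then trunc (fun s1 => t s1 = n + 1) (Q j') else trunc (fun _ => False) (Q j')) j := by
  rw [TDAaux_succ, h]

lemma TDAaux_some {E : Prio I S} {t : S → ℕ} {Q : I → Pref S} {n : ℕ} {j : I} {s0 : S}
    (h : TDAaux E t Q n j = some s0) : TDAaux E t Q (n+1) j = some s0 := by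
  rw [TDAaux_succ, h]

lemma TDAaux_pers (E : Prio I S) (t : S → ℕ) (Q : I → Pref S) {n m : ℕ} (h : n ≤ m)
    {j : I} {s0 : S} (hs : TDAaux E t Q n j = some s0) : TDAaux E t Q m j = some s0 := by
  induction m with
  | zero =>
    have h0 : n = 0 := by omega
    subst h0; exact hs
  | succ m ih =>
    rcases Nat.lt_or_ge n (m+1) with h1 | h1
    · exact TDAaux_some (ih (by omega))
    · have h0 : n = m + 1 := by omega
      subst h0; exact hs

end EquivAux

/-- If the report `Qi` misranks two same-tier schools relative to the
true preference `Ri`, and `Qstar` agrees with `Qi` except that the acceptable schools of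
that tier are reordered according to `Ri` (staying acceptable), then against every profile
of the others' reports, `Qstar` yields a weakly better assignment for `i` (by `Ri`) than
`Qi`; consequently `Qi` is weakly dominated by `Qstar` or always yields the same
assignment for `i`. -/
theorem within_tier_consistent_report_weakly_dominates
    (E : Prio I S) (t : S → ℕ) (T : ℕ) (ht : IsTierStructure t T)
    (i : I) (Ri Qi Qstar : Pref S) (s s' : S)
    (htier : t s = t s')
    (htrue : Ri.rank (some s) < Ri.rank (some s'))
    (hmis : Qi.rank (some s') < Qi.rank (some s))
    (hin : ∀ s1 s2 : S,
      (t s1 = t s ∧ Qi.rank (some s1) < Qi.rank none) →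
      (t s2 = t s ∧ Qi.rank (some s2) < Qi.rank none) →
      (Qstar.rank (some s1) < Qstar.rank (some s2) ↔ Ri.rank (some s1) < Ri.rank (some s2)))
    (hout : ∀ x y : Option S,
      (∀ s1 : S, x = some s1 → ¬ (t s1 = t s ∧ Qi.rank (some s1) < Qi.rank none)) →
      (∀ s2 : S, y = some s2 → ¬ (t s2 = t s ∧ Qi.rank (some s2) < Qi.rank none)) →
      (Qstar.rank x < Qstar.rank y ↔ Qi.rank x < Qi.rank y))
    (hacc : ∀ s1 : S, t s1 = t s → Qi.rank (some s1) < Qi.rank none →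
      Qstar.rank (some s1) < Qstar.rank none) :
    (∀ Q : I → Pref S,
      Ri.rank (TDA E t (Function.update Q i Qstar) i) ≤
        Ri.rank (TDA E t (Function.update Q i Qi) i)) ∧
    ((∃ Q : I → Pref S,
        Ri.rank (TDA E t (Function.update Q i Qstar) i) <
          Ri.rank (TDA E t (Function.update Q i Qi) i)) ∨
      (∀ Q : I → Pref S,
        TDA E t (Function.update Q i Qstar) i = TDA E t (Function.update Q i Qi) i)) := by
  classical
  have htpos : 1 ≤ t s := (ht.1 s).1
  have hsup : t s ≤ Finset.univ.sup t := Finset.le_sup (Finset.mem_univ s)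
  have hacc_iff : ∀ s1 : S, t s1 = t s →
      (Qi.rank (some s1) < Qi.rank none ↔ Qstar.rank (some s1) < Qstar.rank none) := by
    intro s1 h1
    constructor
    · exact hacc s1 h1
    · intro h2
      by_contra h3
      have h4 := hout (some s1) none
        (fun s2 h5 => by injection h5 with h6; subst h6; exact fun hc => h3 hc.2)
        (fun s2 h5 => by cases h5)
      exact h3 (h4.mp h2)
  have hEq : ∀ m : ℕ, m ≠ t s →
      EqAcc (trunc (fun s1 => t s1 = m) Qi) (trunc (fun s1 => t s1 = m) Qstar) := by
    intro m hm
    apply eqacc_trunc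
    intro x y hx hy
    exact (hout x y
      (fun s1 h1 hc => hm ((hx s1 h1).symm.trans hc.1))
      (fun s2 h2 hc => hm ((hy s2 h2).symm.trans hc.1))).symm
  have key : ∀ Q : I → Pref S,
      Ri.rank (TDA E t (Function.update Q i Qstar) i) ≤
        Ri.rank (TDA E t (Function.update Q i Qi) i) := by
    intro Q
    set Q1 := Function.update Q i Qi with hQ1
    set Q2 := Function.update Q i Qstar with hQ2
    have hQ1i : Q1 i = Qi := Function.update_self i Qi Q
    have hQ2i : Q2 i = Qstar := Function.update_self i Qstar Q
    have hQ12 : ∀ j, j ≠ i → Q1 j = Q2 j := by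
      intro j hj
      rw [hQ1, hQ2, Function.update_of_ne hj, Function.update_of_ne hj]
    have hstep : ∀ n : ℕ, (n + 1 ≠ t s ∨ TDAaux E t Q2 n i ≠ none) →
        TDAaux E t Q1 n = TDAaux E t Q2 n →
        TDAaux E t Q1 (n+1) = TDAaux E t Q2 (n+1) := by
      intro n hc hprev
      have hDA : DA E (fun j => if TDAaux E t Q2 n j = none
            then trunc (fun s1 => t s1 = n + 1) (Q1 j) else trunc (fun _ => False) (Q1 j))
          = DA E (fun j => if TDAaux E t Q2 n j = none
            then trunc (fun s1 => t s1 = n + 1) (Q2 j) else trunc (fun _ => False) (Q2 j)) := by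
        apply DA_congr
        intro j
        by_cases hji : j = i
        · subst hji
          by_cases hmi : TDAaux E t Q2 n j = none
          · rw [if_pos hmi, if_pos hmi, hQ1i, hQ2i]
            apply hEq
            rcases hc with h | h
            · exact h
            · exact absurd hmi h
          · rw [if_neg hmi, if_neg hmi, hQ1i, hQ2i]
            exact eqacc_truncFalse Qi Qstar
        · rw [hQ12 j hji]
          exact eqacc_refl _
      funext j
      rw [TDAaux_succ, TDAaux_succ, hprev, hDA]
    have hpre : ∀ m : ℕ, m < t s → TDAaux E t Q1 m = TDAaux E t Q2 m := by
      intro m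
      induction m with
      | zero => intro _; rfl
      | succ m ih =>
        intro hm
        exact hstep m (Or.inl (by omega)) (ih (by omega))
    have hpost : TDAaux E t Q1 (t s) = TDAaux E t Q2 (t s) →
        ∀ n0 : ℕ, TDAaux E t Q1 (t s + n0) = TDAaux E t Q2 (t s + n0) := by
      intro h0 n0
      induction n0 with
      | zero => exact h0
      | succ n0 ih =>
        rw [show t s + (n0+1) = (t s + n0) + 1 by omega]
        exact hstep (t s + n0) (Or.inl (by omega)) ih
    have hprev := hpre (t s - 1) (by omega)
    by_cases hmi : TDAaux E t Q1 (t s - 1) i = none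
    · -- i is unmatched entering his tier's round
      have hmi2 : TDAaux E t Q2 (t s - 1) i = none := by rw [← hprev]; exact hmi
      set prof1 : I → Pref S := fun j => if TDAaux E t Q2 (t s - 1) j = none
          then trunc (fun s1 => t s1 = t s) (Q1 j) else trunc (fun _ => False) (Q1 j) with hprof1
      set prof2 : I → Pref S := fun j => if TDAaux E t Q2 (t s - 1) j = none
          then trunc (fun s1 => t s1 = t s) (Q2 j) else trunc (fun _ => False) (Q2 j) with hprof2
      have hTD1 : TDAaux E t Q1 (t s) i = DA E prof1 i := by
        have h1 := TDAaux_none (E := E) (t := t) (Q := Q1) hmi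
        rw [show (t s - 1) + 1 = t s by omega] at h1
        rw [hprev] at h1
        exact h1
      have hTD2 : TDAaux E t Q2 (t s) i = DA E prof2 i := by
        have h1 := TDAaux_none (E := E) (t := t) (Q := Q2) hmi2
        rw [show (t s - 1) + 1 = t s by omega] at h1
        exact h1
      have hup1 : Function.update prof2 i (prof1 i) = prof1 := by
        funext j
        by_cases hji : j = i
        · subst hji
          rw [Function.update_self]
        · rw [Function.update_of_ne hji, hprof1, hprof2]
          dsimp only
          rw [hQ12 j hji]
      have hup2 : Function.update prof1 i (prof2 i) = prof2 := by
        funext j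
        by_cases hji : j = i
        · subst hji
          rw [Function.update_self]
        · rw [Function.update_of_ne hji, hprof1, hprof2]
          dsimp only
          rw [hQ12 j hji]
      have hsp1 := DA_sp E prof2 i (prof1 i)
      rw [hup1] at hsp1
      have hsp2 := DA_sp E prof1 i (prof2 i)
      rw [hup2] at hsp2
      have hprof1i : prof1 i = trunc (fun s1 => t s1 = t s) Qi := by
        rw [hprof1]
        dsimp only
        rw [if_pos hmi2, hQ1i]
      have hprof2i : prof2 i = trunc (fun s1 => t s1 = t s) Qstar := by
        rw [hprof2]
        dsimp only
        rw [if_pos hmi2, hQ2i]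
      have haIR := (DA_SO E prof2).1.2.1 i
      have hbIR := (DA_SO E prof1).1.2.1 i
      cases ha : DA E prof2 i with
      | some a' =>
        have ha' : t a' = t s ∧ Qstar.rank (some a') < Qstar.rank none := by
          rw [ha, hprof2i, trunc_accle_iff] at haIR
          rcases haIR with h | ⟨s2, hs2, hA, hac⟩
          · cases h
          · injection hs2 with h6
            subst h6
            exact ⟨hA, hac⟩
        have haQi : Qi.rank (some a') < Qi.rank none := (hacc_iff a' ha'.1).mpr ha'.2
        cases hbv : DA E prof1 i with
        | none =>
          exfalso
          rw [ha, hbv, hprof1i] at hsp2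
          have h7 : (trunc (fun s1 => t s1 = t s) Qi).rank (some a')
              < (trunc (fun s1 => t s1 = t s) Qi).rank none :=
            (trunc_acc_iff _ Qi a').mpr ⟨ha'.1, haQi⟩
          omega
        | some b' =>
          have hb' : t b' = t s ∧ Qi.rank (some b') < Qi.rank none := by
            rw [hbv, hprof1i, trunc_accle_iff] at hbIR
            rcases hbIR with h | ⟨s2, hs2, hA, hac⟩
            · cases h
            · injection hs2 with h6
              subst h6
              exact ⟨hA, hac⟩
          rw [ha, hbv, hprof2i] at hsp1
          rw [trunc_rank_pos Qstar ha'.1, trunc_rank_pos Qstar hb'.1] at hsp1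
          have hfin : Ri.rank (some a') ≤ Ri.rank (some b') := by
            have hiff := hin b' a' ⟨hb'.1, hb'.2⟩ ⟨ha'.1, haQi⟩
            by_contra hl
            push_neg at hl
            have h8 := hiff.mpr hl
            omega
          have hs1f : TDAaux E t Q1 (Finset.univ.sup t) i = some b' :=
            TDAaux_pers E t Q1 hsup (by rw [hTD1]; exact hbv)
          have hs2f : TDAaux E t Q2 (Finset.univ.sup t) i = some a' :=
            TDAaux_pers E t Q2 hsup (by rw [hTD2]; exact ha)
          show Ri.rank (TDAaux E t Q2 (Finset.univ.sup t) i)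
            ≤ Ri.rank (TDAaux E t Q1 (Finset.univ.sup t) i)
          rw [hs1f, hs2f]
          exact hfin
      | none =>
        have hbn : DA E prof1 i = none := by
          cases hbv : DA E prof1 i with
          | none => rfl
          | some b' =>
            exfalso
            have hb' : t b' = t s ∧ Qi.rank (some b') < Qi.rank none := by
              rw [hbv, hprof1i, trunc_accle_iff] at hbIR
              rcases hbIR with h | ⟨s2, hs2, hA, hac⟩
              · cases h
              · injection hs2 with h6
                subst h6
                exact ⟨hA, hac⟩
            have hbQstar : Qstar.rank (some b') < Qstar.rank none := (hacc_iff b' hb'.1).mp hb'.2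
            rw [ha, hbv, hprof2i] at hsp1
            have h7 : (trunc (fun s1 => t s1 = t s) Qstar).rank (some b')
                < (trunc (fun s1 => t s1 = t s) Qstar).rank none :=
              (trunc_acc_iff _ Qstar b').mpr ⟨hb'.1, hbQstar⟩
            omega
        have hprofeq : ∀ j, j ≠ i → prof1 j = prof2 j := by
          intro j hj
          rw [hprof1, hprof2]
          dsimp only
          rw [hQ12 j hj]
        have hso1 := DA_SO E prof1
        have hso2 := DA_SO E prof2
        have hchar1 : ∀ s1 : S, (prof1 i).rank (some s1) < (prof1 i).rank none →
            (prof2 i).rank (some s1) < (prof2 i).rank none := by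
          intro s1 h1
          rw [hprof1i, trunc_acc_iff] at h1
          rw [hprof2i]
          exact (trunc_acc_iff _ Qstar s1).mpr ⟨h1.1, (hacc_iff s1 h1.1).mp h1.2⟩
        have hchar2 : ∀ s1 : S, (prof2 i).rank (some s1) < (prof2 i).rank none →
            (prof1 i).rank (some s1) < (prof1 i).rank none := by
          intro s1 h1
          rw [hprof2i, trunc_acc_iff] at h1
          rw [hprof1i]
          exact (trunc_acc_iff _ Qi s1).mpr ⟨h1.1, (hacc_iff s1 h1.1).mpr h1.2⟩
        have hst21 : Stable E prof1 (DA E prof2) := by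
          refine ⟨hso2.1.1, ?_, ?_⟩
          · intro j
            by_cases hji : j = i
            · subst hji
              rw [ha]
            · rw [hprofeq j hji]
              exact hso2.1.2.1 j
          · intro j s1 hbl
            by_cases hji : j = i
            · subst hji
              have h1 := hbl.1
              rw [ha] at h1
              exact hso2.1.2.2 j s1 ⟨by rw [ha]; exact hchar1 s1 h1, hbl.2⟩
            · exact hso2.1.2.2 j s1 (blocks_congr (hprofeq j hji) hbl)
        have hst12 : Stable E prof2 (DA E prof1) := by
          refine ⟨hso1.1.1, ?_, ?_⟩
          · intro j
            by_cases hji : j = i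
            · subst hji
              rw [hbn]
            · rw [← hprofeq j hji]
              exact hso1.1.2.1 j
          · intro j s1 hbl
            by_cases hji : j = i
            · subst hji
              have h1 := hbl.1
              rw [hbn] at h1
              exact hso1.1.2.2 j s1 ⟨by rw [hbn]; exact hchar2 s1 h1, hbl.2⟩
            · exact hso1.1.2.2 j s1 (blocks_congr (hprofeq j hji).symm hbl)
        have hDAeq12 : DA E prof1 = DA E prof2 := by
          funext j
          by_cases hji : j = i
          · subst hji
            rw [ha, hbn]
          · have h1 := hso1.2 (DA E prof2) hst21 j
            have h2 := hso2.2 (DA E prof1) hst12 j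
            rw [hprofeq j hji] at h1
            exact (prof2 j).inj (le_antisymm h1 h2)
        have hk : TDAaux E t Q1 (t s) = TDAaux E t Q2 (t s) := by
          funext j
          cases hm : TDAaux E t Q2 (t s - 1) j with
          | none =>
            have hm1 : TDAaux E t Q1 (t s - 1) j = none := by rw [hprev]; exact hm
            have e1 := TDAaux_none (E := E) (t := t) (Q := Q1) hm1
            have e2 := TDAaux_none (E := E) (t := t) (Q := Q2) hm
            rw [show (t s - 1) + 1 = t s by omega] at e1 e2
            rw [hprev] at e1
            rw [e1, e2]
            exact congrFun hDAeq12 j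
          | some s0 =>
            have hm1 : TDAaux E t Q1 (t s - 1) j = some s0 := by rw [hprev]; exact hm
            have e1 := TDAaux_some (E := E) (t := t) (Q := Q1) hm1
            have e2 := TDAaux_some (E := E) (t := t) (Q := Q2) hm
            rw [show (t s - 1) + 1 = t s by omega] at e1 e2
            rw [e1, e2]
        have hall := hpost hk (Finset.univ.sup t - t s)
        rw [show t s + (Finset.univ.sup t - t s) = Finset.univ.sup t by omega] at hall
        show Ri.rank (TDAaux E t Q2 (Finset.univ.sup t) i)
          ≤ Ri.rank (TDAaux E t Q1 (Finset.univ.sup t) i)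
        rw [hall]
    · -- i is already matched before his tier's round
      have hk : TDAaux E t Q1 (t s) = TDAaux E t Q2 (t s) := by
        have h1 := hstep (t s - 1) (Or.inr (by rw [← hprev]; exact hmi)) hprev
        rwa [show t s - 1 + 1 = t s by omega] at h1
      have hall := hpost hk (Finset.univ.sup t - t s)
      rw [show t s + (Finset.univ.sup t - t s) = Finset.univ.sup t by omega] at hall
      show Ri.rank (TDAaux E t Q2 (Finset.univ.sup t) i)
        ≤ Ri.rank (TDAaux E t Q1 (Finset.univ.sup t) i)
      rw [hall]
  refine ⟨key, ?_⟩
  by_cases hex : ∃ Q : I → Pref S,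
      Ri.rank (TDA E t (Function.update Q i Qstar) i) <
        Ri.rank (TDA E t (Function.update Q i Qi) i)
  · exact Or.inl hex
  · push_neg at hex
    refine Or.inr fun Q => ?_
    exact Ri.inj (le_antisymm (key Q) (hex Q))

end SchoolChoice
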